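/- Let k ≥ 2 be an even integer and G an even polynomial with real coefficients of degree ≥ 2 satisfying G(0) = 1 and G(−1) = G(−2) = 0, and let T be the associated contour integral. Then for every real j > 0 there exists a constant C > 0, depending only on j, k and G, such that |T(y)| ≤ C·y^{−j} for all real y ≥ 1. -/

import Mathlib

/-- `T(y) = (1/2πi) ∫_{(2)} (Γ(s+k/2)/Γ(k/2)) G(s) y^{-s} ds/s`,
written as an integral over the vertical line `s = 2 + it`. -/
noncomputable def Tint (k : ℕ) (G : Polynomial ℝ) (y : ℝ) : ℂ :=
  (1 / (2 * Real.pi) : ℂ) * ∫ t : ℝ,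
    Complex.Gamma ((2 + (t : ℂ) * Complex.I) + (k : ℂ) / 2) / Complex.Gamma ((k : ℂ) / 2) *
      Polynomial.aeval (2 + (t : ℂ) * Complex.I) G *
      (y : ℂ) ^ (-(2 + (t : ℂ) * Complex.I)) / (2 + (t : ℂ) * Complex.I)

open MeasureTheory Set Filter

open MeasureTheory Set Filter

lemma my_abs_Gamma_le {s : ℂ} (hs : 0 < s.re) :
    ‖Complex.Gamma s‖ ≤ Real.Gamma s.re := by
  rw [Complex.Gamma_eq_integral hs, Real.Gamma_eq_integral hs, Complex.GammaIntegral]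
  refine (norm_integral_le_integral_norm _).trans (le_of_eq ?_)
  refine setIntegral_congr_fun measurableSet_Ioi fun x hx => ?_
  rw [norm_mul, Complex.norm_real, Real.norm_eq_abs,
    abs_of_pos (Real.exp_pos _), Complex.norm_cpow_eq_rpow_re_of_pos hx]
  rw [Complex.sub_re, Complex.one_re]

lemma my_gamma_decay (n : ℕ) : ∀ s : ℂ, 1 ≤ s.re →
    ‖Complex.Gamma s‖ ≤ Real.Gamma (s.re + n) / max 1 |s.im| ^ n := by
  induction n with
  | zero =>
    intro s hs
    simpa using my_abs_Gamma_le (lt_of_lt_of_le one_pos hs)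
  | succ n ih =>
    intro s hs
    have hs0 : s ≠ 0 := by
      intro h; rw [h] at hs; simp at hs; linarith
    have hM : (1:ℝ) ≤ max 1 |s.im| := le_max_left _ _
    have hMpos : (0:ℝ) < max 1 |s.im| := lt_of_lt_of_le one_pos hM
    have habs : max 1 |s.im| ≤ ‖s‖ :=
      max_le (hs.trans ((Complex.re_le_norm s))) (Complex.abs_im_le_norm s)
    have h1 : Complex.Gamma s = Complex.Gamma (s + 1) / s := by
      rw [Complex.Gamma_add_one s hs0]
      field_simp
    have h2 := ih (s+1) (by rw [Complex.add_re, Complex.one_re]; linarith)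
    rw [Complex.add_re, Complex.add_im, Complex.one_re, Complex.one_im, add_zero] at h2
    have hΓpos : (0:ℝ) < Real.Gamma (s.re + 1 + n) := Real.Gamma_pos_of_pos (by linarith)
    rw [h1, norm_div]
    calc ‖Complex.Gamma (s+1)‖ / ‖s‖
        ≤ (Real.Gamma (s.re + 1 + n) / max 1 |s.im| ^ n) / max 1 |s.im| := by
          apply div_le_div₀ (by positivity) h2 hMpos habs
      _ = Real.Gamma (s.re + (n+1:ℕ)) / max 1 |s.im| ^ (n+1) := by
          rw [div_div, ← pow_succ]
          norm_num; ring_nf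
  
lemma my_poly_bound (G : Polynomial ℝ) (s : ℂ) :
    ‖(Polynomial.aeval s) G‖ ≤
      (∑ i ∈ Finset.range (G.natDegree+1), |G.coeff i|) * max 1 ‖s‖ ^ G.natDegree := by
  rw [Polynomial.aeval_eq_sum_range]
  calc ‖∑ i ∈ Finset.range (G.natDegree+1), G.coeff i • s ^ i‖
      ≤ ∑ i ∈ Finset.range (G.natDegree+1), ‖G.coeff i • s ^ i‖ := norm_sum_le _ _
    _ ≤ ∑ i ∈ Finset.range (G.natDegree+1), |G.coeff i| * max 1 ‖s‖ ^ G.natDegree := by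
        refine Finset.sum_le_sum fun i hi => ?_
        rw [norm_smul, Real.norm_eq_abs, norm_pow]
        refine mul_le_mul_of_nonneg_left ?_ (abs_nonneg _)
        calc ‖s‖ ^ i ≤ max 1 ‖s‖ ^ i :=
              pow_le_pow_left₀ (norm_nonneg _) (le_max_right _ _) _
          _ ≤ max 1 ‖s‖ ^ G.natDegree :=
              pow_le_pow_right₀ (le_max_left _ _) (Finset.mem_range_succ_iff.mp hi)
    _ = _ := by rw [← Finset.sum_mul]


lemma my_integrable {g : ℝ → ℂ} {C : ℝ} (hc : Continuous g)
    (hb : ∀ t : ℝ, ‖g t‖ ≤ C / (1 + t ^ 2)) : Integrable g := by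
  refine (integrable_inv_one_add_sq.const_mul C).mono' hc.aestronglyMeasurable ?_
  refine Eventually.of_forall fun t => (hb t).trans (le_of_eq ?_)
  rw [div_eq_mul_inv]

lemma my_contour_shift (f : ℂ → ℂ) (a b C : ℝ) (hab : a ≤ b)
    (hd : ∀ s : ℂ, s.re ∈ Set.Icc a b → DifferentiableAt ℂ f s)
    (hb : ∀ x ∈ Set.Icc a b, ∀ t : ℝ, ‖f (↑x + ↑t * Complex.I)‖ ≤ C / (1 + t ^ 2)) :
    ∫ t : ℝ, f (↑a + ↑t * Complex.I) = ∫ t : ℝ, f (↑b + ↑t * Complex.I) := by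
  have hmem : ∀ (x t : ℝ), x ∈ Set.Icc a b → (↑x + ↑t * Complex.I).re ∈ Set.Icc a b := by
    intro x t hx; simpa using hx
  have hcont : ∀ x ∈ Set.Icc a b, Continuous fun t : ℝ => f (↑x + ↑t * Complex.I) := by
    intro x hx
    refine continuous_iff_continuousAt.mpr fun t => ?_
    have hg : ContinuousAt (fun t : ℝ => (↑x + ↑t * Complex.I : ℂ)) t := by fun_prop
    exact ContinuousAt.comp (g := f) (f := fun t : ℝ => (↑x + ↑t * Complex.I : ℂ))
      (hd _ (hmem x t hx)).continuousAt hg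
  have hint : ∀ x ∈ Set.Icc a b, Integrable fun t : ℝ => f (↑x + ↑t * Complex.I) :=
    fun x hx => my_integrable (hcont x hx) (hb x hx)
  have haI : a ∈ Set.Icc a b := ⟨le_refl a, hab⟩
  have hbI : b ∈ Set.Icc a b := ⟨hab, le_refl b⟩
  -- limits of truncated integrals
  have hVa : Tendsto (fun T : ℝ => ∫ t in -T..T, f (↑a + ↑t * Complex.I)) atTop
      (nhds (∫ t : ℝ, f (↑a + ↑t * Complex.I))) :=
    intervalIntegral_tendsto_integral (hint a haI) tendsto_neg_atTop_atBot tendsto_id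
  have hVb : Tendsto (fun T : ℝ => ∫ t in -T..T, f (↑b + ↑t * Complex.I)) atTop
      (nhds (∫ t : ℝ, f (↑b + ↑t * Complex.I))) :=
    intervalIntegral_tendsto_integral (hint b hbI) tendsto_neg_atTop_atBot tendsto_id
  -- rectangle identity
  have hrect : ∀ T : ℝ,
      (∫ t in -T..T, f (↑b + ↑t * Complex.I)) - ∫ t in -T..T, f (↑a + ↑t * Complex.I) =
        Complex.I * ((∫ x in a..b, f (↑x + ↑(-T) * Complex.I)) -
          ∫ x in a..b, f (↑x + ↑T * Complex.I)) := by
    intro T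
    have key := Complex.integral_boundary_rect_eq_zero_of_differentiableOn f
      (↑a + ↑(-T) * Complex.I) (↑b + ↑T * Complex.I) ?_
    · have hre1 : (↑a + ↑(-T) * Complex.I).re = a := by simp
      have hre2 : (↑b + ↑T * Complex.I).re = b := by simp
      have him1 : (↑a + ↑(-T) * Complex.I).im = -T := by simp
      have him2 : (↑b + ↑T * Complex.I).im = T := by simp
      rw [hre1, hre2, him1, him2] at key
      have := congrArg (fun z => Complex.I * z) key
      simp only [smul_eq_mul, mul_zero] at this
      -- expand and solve linearly
      rw [mul_sub, mul_add, mul_sub] at this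
      have hII : Complex.I * Complex.I = -1 := Complex.I_mul_I
      linear_combination -this + ((∫ t in (-T)..T, f (↑b + ↑t * Complex.I)) -
        ∫ t in (-T)..T, f (↑a + ↑t * Complex.I)) * hII
    · intro s hs
      rw [Complex.mem_reProdIm] at hs
      have hre1 : (↑a + ↑(-T) * Complex.I).re = a := by simp
      have hre2 : (↑b + ↑T * Complex.I).re = b := by simp
      rw [hre1, hre2] at hs
      have : s.re ∈ Set.Icc a b := by
        rcases hs with ⟨h1, _⟩
        rwa [Set.uIcc_of_le hab] at h1
      exact (hd s this).differentiableWithinAt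
  -- the horizontal integrals tend to zero
  have hHbound : ∀ (T u : ℝ), ‖∫ x in a..b, f (↑x + ↑u * Complex.I)‖ ≤ C / (1 + u ^ 2) * |b - a| := by
    intro T u
    refine intervalIntegral.norm_integral_le_of_norm_le_const fun x hx => ?_
    have hx' : x ∈ Set.Icc a b := by
      rw [Set.uIoc_of_le hab] at hx
      exact ⟨le_of_lt hx.1, hx.2⟩
    exact hb x hx' u
  have hC : 0 ≤ C := by
    have := (norm_nonneg _).trans (hb a haI 0)
    simpa using this
  have hdiff : Tendsto (fun T : ℝ =>
      (∫ t in -T..T, f (↑b + ↑t * Complex.I)) - ∫ t in -T..T, f (↑a + ↑t * Complex.I)) atTop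
      (nhds 0) := by
    have hg : Tendsto (fun T : ℝ => 2 * (C / (1 + T ^ 2) * |b - a|)) atTop (nhds 0) := by
      have h1 : Tendsto (fun T : ℝ => 1 + T ^ 2) atTop atTop :=
        tendsto_atTop_add_const_left _ _ (tendsto_pow_atTop two_ne_zero)
      have := (tendsto_const_nhds (x := C)).div_atTop h1
      have h2 := (this.mul_const |b - a|).const_mul 2
      simpa using h2
    refine squeeze_zero_norm (fun T => ?_) hg
    rw [hrect T, norm_mul, Complex.norm_I, one_mul]
    calc ‖(∫ x in a..b, f (↑x + ↑(-T) * Complex.I)) - ∫ x in a..b, f (↑x + ↑T * Complex.I)‖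
        ≤ ‖∫ x in a..b, f (↑x + ↑(-T) * Complex.I)‖ + ‖∫ x in a..b, f (↑x + ↑T * Complex.I)‖ :=
          norm_sub_le _ _
      _ ≤ C / (1 + (-T) ^ 2) * |b - a| + C / (1 + T ^ 2) * |b - a| :=
          add_le_add (hHbound T (-T)) (hHbound T T)
      _ = 2 * (C / (1 + T ^ 2) * |b - a|) := by rw [neg_pow]; ring
  have := tendsto_nhds_unique (hVb.sub hVa) hdiff
  exact (sub_eq_zero.mp this).symm


lemma my_line_continuous (f : ℂ → ℂ) (x : ℝ)
    (hd : ∀ s : ℂ, s.re = x → DifferentiableAt ℂ f s) :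
    Continuous fun t : ℝ => f (↑x + ↑t * Complex.I) := by
  refine continuous_iff_continuousAt.mpr fun t => ?_
  have hg : ContinuousAt (fun t : ℝ => (↑x + ↑t * Complex.I : ℂ)) t := by fun_prop
  exact ContinuousAt.comp (g := f) (f := fun t : ℝ => (↑x + ↑t * Complex.I : ℂ))
    (hd _ (by simp)).continuousAt hg

noncomputable def fker (k : ℕ) (G : Polynomial ℝ) (y : ℝ) (s : ℂ) : ℂ :=
  Complex.Gamma (s + (k : ℂ) / 2) / Complex.Gamma ((k : ℂ) / 2) *
    Polynomial.aeval s G * (y : ℂ) ^ (-s) / s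

lemma fker_diff (k : ℕ) (G : Polynomial ℝ) {y : ℝ} (hy : 0 < y) {s : ℂ}
    (hs : 2 ≤ s.re) : DifferentiableAt ℂ (fker k G y) s := by
  have hs0 : s ≠ 0 := by
    intro h; rw [h] at hs; norm_num at hs
  have h1 : DifferentiableAt ℂ (fun s : ℂ => Complex.Gamma (s + (k : ℂ) / 2)) s := by
    have hpole : ∀ m : ℕ, s + (k : ℂ) / 2 ≠ -m := by
      intro m h
      have := congrArg Complex.re h
      simp only [Complex.add_re, Complex.div_re, Complex.natCast_re, Complex.neg_re] at this
      have hk0 : (0:ℝ) ≤ (k:ℝ) := Nat.cast_nonneg k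
      have hre : (s + (k : ℂ) / 2).re = s.re + k / 2 := by
        simp [Complex.add_re, Complex.div_ofNat_re]
      rw [h] at hre
      simp only [Complex.neg_re, Complex.natCast_re] at hre
      have : (0:ℝ) ≤ (m:ℝ) := Nat.cast_nonneg m
      linarith
    exact (Complex.differentiableAt_Gamma _ hpole).comp s
      ((differentiableAt_id.add_const _))
  have h2 : DifferentiableAt ℂ (fun s : ℂ => (Polynomial.aeval s) G) s := by
    have : (fun s : ℂ => (Polynomial.aeval s) G) =
        fun s : ℂ => (G.map (algebraMap ℝ ℂ)).eval s := by
      funext z; rw [Polynomial.aeval_def, Polynomial.eval_map]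
    rw [this]
    exact (G.map (algebraMap ℝ ℂ)).differentiableAt
  have h3 : DifferentiableAt ℂ (fun s : ℂ => (y : ℂ) ^ (-s)) s := by
    refine DifferentiableAt.const_cpow (differentiableAt_id.neg) (Or.inl ?_)
    exact_mod_cast hy.ne'
  exact (((h1.div_const _).mul h2).mul h3).div differentiableAt_id hs0

set_option maxHeartbeats 1000000 in
lemma fker_bound (k : ℕ) (hk : 2 ≤ k) (G : Polynomial ℝ) {σ : ℝ} (hσ : 2 ≤ σ)
    {y : ℝ} (hy : 0 < y) {x : ℝ} (hx : x ∈ Set.Icc 2 σ) (t : ℝ) :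
    ‖fker k G y (↑x + ↑t * Complex.I)‖ ≤
      2 * (Real.Gamma (σ + (k:ℝ)/2 + (G.natDegree+1)) *
        ((∑ i ∈ Finset.range (G.natDegree+1), |G.coeff i|) * (σ+1) ^ G.natDegree) /
        Real.Gamma ((k:ℝ)/2)) * y ^ (-x) / (1 + t^2) := by
  set d := G.natDegree with hd
  set B := ∑ i ∈ Finset.range (d+1), |G.coeff i| with hB
  set s : ℂ := ↑x + ↑t * Complex.I with hsdef
  set M : ℝ := max 1 |t| with hMdef
  obtain ⟨hx2, hxσ⟩ := hx
  have hk2 : (1:ℝ) ≤ (k:ℝ)/2 := by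
    have : (2:ℝ) ≤ (k:ℝ) := by exact_mod_cast hk
    linarith
  have hM1 : (1:ℝ) ≤ M := le_max_left _ _
  have hM0 : (0:ℝ) < M := lt_of_lt_of_le one_pos hM1
  have hsre : s.re = x := by simp [hsdef]
  have hsim : s.im = t := by simp [hsdef]
  have hGk : Complex.Gamma ((k : ℂ) / 2) = ((Real.Gamma ((k:ℝ)/2) : ℝ) : ℂ) := by
    rw [← Complex.Gamma_ofReal]
    norm_num
  have hGkpos : 0 < Real.Gamma ((k:ℝ)/2) := Real.Gamma_pos_of_pos (by linarith)
  -- bound on the Gamma factor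
  have hres : (s + (k : ℂ) / 2).re = x + (k:ℝ)/2 := by
    simp [hsdef, Complex.add_re, Complex.div_re]
  have hims : (s + (k : ℂ) / 2).im = t := by
    simp [hsdef, Complex.add_im, Complex.div_im]
  have h1 : ‖Complex.Gamma (s + (k : ℂ) / 2)‖ ≤
      Real.Gamma (σ + (k:ℝ)/2 + (d+1)) / M ^ (d+1) := by
    have := my_gamma_decay (d+1) (s + (k : ℂ) / 2) (by rw [hres]; linarith)
    rw [hres, hims] at this
    refine this.trans ?_
    have hcast : ((d+1:ℕ):ℝ) = (d:ℝ)+1 := by push_cast; ring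
    rw [hcast]
    have hmono : Real.Gamma (x + (k:ℝ)/2 + ((d:ℝ)+1)) ≤ Real.Gamma (σ + (k:ℝ)/2 + ((d:ℝ)+1)) := by
      refine Real.Gamma_strictMonoOn_Ici.monotoneOn ?_ ?_ (by linarith)
      · simp only [Set.mem_Ici]
        have hd0 : (0:ℝ) ≤ (d:ℝ) := Nat.cast_nonneg d
        linarith
      · simp only [Set.mem_Ici]
        have hd0 : (0:ℝ) ≤ (d:ℝ) := Nat.cast_nonneg d
        linarith
    gcongr
  -- bound on the polynomial factor
  have hnorms_le : ‖s‖ ≤ (σ+1) * M := by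
    have h0 : ‖s‖ ≤ |x| + |t| := by
      rw [hsdef]
      refine (norm_add_le _ _).trans ?_
      rw [norm_mul, Complex.norm_real, Complex.norm_I, mul_one, Complex.norm_real]
      simp [Real.norm_eq_abs]
    have h0' : |x| = x := abs_of_pos (by linarith)
    have h1' : |t| ≤ M := le_max_right _ _
    have h2' : x ≤ σ * M := le_trans hxσ (le_mul_of_one_le_right (by linarith) hM1)
    nlinarith [abs_nonneg t]
  have hpoly : ‖(Polynomial.aeval s) G‖ ≤ B * ((σ+1)^d * M^d) := by
    refine (my_poly_bound G s).trans ?_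
    rw [← hB, ← hd]
    have hmax : max 1 ‖s‖ ≤ (σ+1) * M := by
      refine max_le ?_ hnorms_le
      nlinarith
    have : max 1 ‖s‖ ^ d ≤ ((σ+1) * M)^d := by
      exact pow_le_pow_left₀ (le_trans zero_le_one (le_max_left _ _)) hmax d
    rw [mul_pow] at this
    have hBnn : 0 ≤ B := Finset.sum_nonneg fun i _ => abs_nonneg _
    exact mul_le_mul_of_nonneg_left this hBnn
  -- the cpow factor
  have hcpow : ‖(y:ℂ) ^ (-s)‖ = y ^ (-x) := by
    rw [Complex.norm_cpow_eq_rpow_re_of_pos hy]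
    rw [Complex.neg_re, hsre]
  -- norm of s from below
  have hslb : M ≤ ‖s‖ := by
    refine max_le ?_ ?_
    · refine le_trans ?_ (Complex.abs_re_le_norm s)
      rw [hsre]; rw [abs_of_pos (by linarith : (0:ℝ) < x)]; linarith
    · rw [← hsim]; exact Complex.abs_im_le_norm s
  -- assemble
  have hs0 : s ≠ 0 := by
    intro h
    rw [h] at hsre; simp at hsre; linarith
  have hexp : ‖fker k G y s‖ = ‖Complex.Gamma (s + (k : ℂ) / 2)‖ /
      Real.Gamma ((k:ℝ)/2) * ‖(Polynomial.aeval s) G‖ * (y ^ (-x)) / ‖s‖ := by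
    rw [fker]
    rw [norm_div, norm_mul, norm_mul, norm_div, hcpow, hGk]
    rw [Complex.norm_real, Real.norm_eq_abs, abs_of_pos hGkpos]
  rw [hexp]
  have hGσpos : 0 < Real.Gamma (σ + (k:ℝ)/2 + ((d:ℝ)+1)) := Real.Gamma_pos_of_pos (by linarith)
  have hBnn : 0 ≤ B := Finset.sum_nonneg fun i _ => abs_nonneg _
  have hynn : (0:ℝ) ≤ y ^ (-x) := Real.rpow_nonneg hy.le _
  calc ‖Complex.Gamma (s + (k : ℂ) / 2)‖ / Real.Gamma ((k:ℝ)/2) *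
        ‖(Polynomial.aeval s) G‖ * y ^ (-x) / ‖s‖
      ≤ (Real.Gamma (σ + (k:ℝ)/2 + ((d:ℝ)+1)) / M ^ (d+1)) / Real.Gamma ((k:ℝ)/2) *
        (B * ((σ+1)^d * M^d)) * y ^ (-x) / M := by
        gcongr
      _ = Real.Gamma (σ + (k:ℝ)/2 + ((d:ℝ)+1)) * (B * (σ+1)^d) / Real.Gamma ((k:ℝ)/2) *
          y ^ (-x) / M^2 := by
        rw [pow_succ]
        field_simp
      _ ≤ 2 * (Real.Gamma (σ + (k:ℝ)/2 + ((d:ℝ)+1)) * (B * (σ+1)^d) / Real.Gamma ((k:ℝ)/2)) *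
          y ^ (-x) / (1 + t^2) := by
        rw [div_le_div_iff₀ (by positivity) (by positivity)]
        have hM2 : 1 ≤ M^2 := one_le_pow₀ hM1
        have hMt : t^2 ≤ M^2 := by
          have := le_max_right 1 |t|
          nlinarith [abs_nonneg t, sq_abs t]
        have hnum : (0:ℝ) ≤ Real.Gamma (σ + (k:ℝ)/2 + ((d:ℝ)+1)) * (B * (σ+1)^d) /
            Real.Gamma ((k:ℝ)/2) * y ^ (-x) := by positivity
        nlinarith [mul_le_mul_of_nonneg_left hMt hnum, mul_le_mul_of_nonneg_left hM2 hnum]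
  


set_option maxHeartbeats 1000000 in
/-- `T(y) ≪_{j,k} y^{-j}` as `y → ∞`. -/
theorem stmt_9 (k : ℕ) (hk : 2 ≤ k) (hke : Even k) (G : Polynomial ℝ)
    (hdeg : 2 ≤ G.natDegree) (heven : ∀ x : ℝ, G.eval (-x) = G.eval x)
    (h0 : G.eval 0 = 1) (h1 : G.eval (-1) = 0) (h2 : G.eval (-2) = 0) :
    ∀ j : ℝ, 0 < j → ∃ C : ℝ, 0 < C ∧ ∀ y : ℝ, 1 ≤ y →
      ‖Tint k G y‖ ≤ C * y ^ (-j) := by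
  intro j hj
  set σ : ℝ := max 2 j with hσdef
  have hσ2 : 2 ≤ σ := le_max_left _ _
  have hjσ : j ≤ σ := le_max_right _ _
  have hk2 : (1:ℝ) ≤ (k:ℝ)/2 := by
    have : (2:ℝ) ≤ (k:ℝ) := by exact_mod_cast hk
    linarith
  have hd0 : (0:ℝ) ≤ (G.natDegree:ℝ) := Nat.cast_nonneg _
  set K : ℝ := 2 * (Real.Gamma (σ + (k:ℝ)/2 + (G.natDegree+1)) *
      ((∑ i ∈ Finset.range (G.natDegree+1), |G.coeff i|) * (σ+1) ^ G.natDegree) /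
      Real.Gamma ((k:ℝ)/2)) with hK
  have hGkpos : 0 < Real.Gamma ((k:ℝ)/2) := Real.Gamma_pos_of_pos (by linarith)
  have hGσpos : 0 < Real.Gamma (σ + (k:ℝ)/2 + (G.natDegree+1)) :=
    Real.Gamma_pos_of_pos (by linarith)
  have hBnn : (0:ℝ) ≤ ∑ i ∈ Finset.range (G.natDegree+1), |G.coeff i| :=
    Finset.sum_nonneg fun i _ => abs_nonneg _
  have hσ1 : (0:ℝ) ≤ (σ+1) ^ G.natDegree := by positivity
  have hKnn : 0 ≤ K := by
    rw [hK]
    apply mul_nonneg (by norm_num)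
    exact div_nonneg (mul_nonneg hGσpos.le (mul_nonneg hBnn hσ1)) hGkpos.le
  refine ⟨K + 1, by linarith, fun y hy => ?_⟩
  have hy0 : (0:ℝ) < y := lt_of_lt_of_le one_pos hy
  have hTint : Tint k G y =
      (1 / (2 * Real.pi) : ℂ) * ∫ t : ℝ, fker k G y (((2:ℝ):ℂ) + ↑t * Complex.I) := by
    rw [Tint]
    congr 1
  have hshift : (∫ t : ℝ, fker k G y (((2:ℝ):ℂ) + ↑t * Complex.I)) =
      ∫ t : ℝ, fker k G y ((σ:ℂ) + ↑t * Complex.I) := by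
    refine my_contour_shift (fker k G y) 2 σ K hσ2 (fun s hs => fker_diff k G hy0 hs.1) ?_
    intro x hx t
    refine (fker_bound k hk G hσ2 hy0 hx t).trans ?_
    rw [hK]
    set A := 2 * (Real.Gamma (σ + (k:ℝ)/2 + (G.natDegree+1)) *
      ((∑ i ∈ Finset.range (G.natDegree+1), |G.coeff i|) * (σ+1) ^ G.natDegree) /
      Real.Gamma ((k:ℝ)/2))
    have hAnn : 0 ≤ A := by
      apply mul_nonneg (by norm_num)
      exact div_nonneg (mul_nonneg hGσpos.le (mul_nonneg hBnn hσ1)) hGkpos.le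
    have hyx : y ^ (-x) ≤ 1 := by
      apply Real.rpow_le_one_of_one_le_of_nonpos hy
      have := hx.1; linarith
    have h5 : A * y ^ (-x) ≤ A := by
      calc A * y ^ (-x) ≤ A * 1 := by
            exact mul_le_mul_of_nonneg_left hyx hAnn
        _ = A := mul_one A
    gcongr
  have hcontσ : Continuous fun t : ℝ => fker k G y ((σ:ℂ) + ↑t * Complex.I) :=
    my_line_continuous (fker k G y) σ fun s hs =>
      fker_diff k G hy0 (by rw [hs]; exact hσ2)
  have hbσ : ∀ t : ℝ, ‖fker k G y ((σ:ℂ) + ↑t * Complex.I)‖ ≤ K * y ^ (-σ) / (1 + t ^ 2) := by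
    intro t
    refine (fker_bound k hk G hσ2 hy0 ⟨hσ2, le_refl σ⟩ t).trans (le_of_eq ?_)
    rw [hK]
  have hintσ : Integrable fun t : ℝ => fker k G y ((σ:ℂ) + ↑t * Complex.I) :=
    my_integrable hcontσ hbσ
  have hIb : ‖∫ t : ℝ, fker k G y ((σ:ℂ) + ↑t * Complex.I)‖ ≤ K * y ^ (-σ) * Real.pi := by
    calc ‖∫ t : ℝ, fker k G y ((σ:ℂ) + ↑t * Complex.I)‖
        ≤ ∫ t : ℝ, K * y ^ (-σ) * (1 + t ^ 2)⁻¹ := by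
          refine norm_integral_le_of_norm_le ((integrable_inv_one_add_sq).const_mul _) ?_
          refine Eventually.of_forall fun t => (hbσ t).trans (le_of_eq ?_)
          rw [div_eq_mul_inv]
      _ = K * y ^ (-σ) * Real.pi := by
          rw [MeasureTheory.integral_const_mul, integral_univ_inv_one_add_sq]
  have hyneg : (0:ℝ) ≤ y ^ (-j) := Real.rpow_nonneg hy0.le _
  have hyσj : y ^ (-σ) ≤ y ^ (-j) := Real.rpow_le_rpow_of_exponent_le hy (by linarith)
  have hyσnn : (0:ℝ) ≤ y ^ (-σ) := Real.rpow_nonneg hy0.le _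
  rw [hTint, hshift, norm_mul]
  have habs1 : ‖(1 / (2 * Real.pi) : ℂ)‖ = 1 / (2 * Real.pi) := by
    rw [norm_div, norm_one, norm_mul, Complex.norm_ofNat, Complex.norm_real,
      Real.norm_eq_abs, abs_of_pos Real.pi_pos]
  rw [habs1]
  calc 1 / (2 * Real.pi) * ‖∫ t : ℝ, fker k G y ((σ:ℂ) + ↑t * Complex.I)‖
      ≤ 1 / (2 * Real.pi) * (K * y ^ (-σ) * Real.pi) := by
        refine mul_le_mul_of_nonneg_left hIb ?_
        positivity
    _ = K * y ^ (-σ) / 2 := by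
        field_simp
    _ ≤ (K + 1) * y ^ (-j) := by
        nlinarith [mul_le_mul_of_nonneg_left hyσj hKnn]
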